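/- Let s be a positive integer and p₁ := s(s−1)+1. Let G be the finite simple graph whose vertex set is the disjoint union of a single vertex u and s+1 pairwise disjoint sets C₁,…,C_{s+1} each of size p₁, in which two distinct vertices are adjacent if and only if they lie in the same set Cᵢ, or one of them is u and the other lies in some Cᵢ. Then the smallest eigenvalue of the adjacency matrix of G is strictly less than −s. -/

import Mathlib

/-- The graph consisting of `s+1` pairwise disjoint cliques `C₁, …, C_{s+1}`,
each of order `p₁ = s(s-1)+1` (with no edges between distinct cliques), together with
an extra vertex `u` (encoded as `none`) adjacent to all clique vertices.
A vertex `some (i, j)` is the `j`-th vertex of the clique `Cᵢ`. -/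
def coneOverCliques (s p : ℕ) : SimpleGraph (Option (Fin s × Fin p)) where
  Adj a b := a ≠ b ∧ (Option.map Prod.fst a = Option.map Prod.fst b ∨ a = none ∨ b = none)
  symm := by
    constructor
    intro a b h
    exact ⟨Ne.symm h.1, by tauto⟩
  loopless := by
    constructor
    intro a h
    exact h.1 rfl

instance (s p : ℕ) : DecidableRel (coneOverCliques s p).Adj := fun a b =>
  inferInstanceAs (Decidable (_ ∧ _))

lemma mem_spectrum_of_eigvec {n : Type*} [Fintype n] [DecidableEq n]
    (A : Matrix n n ℝ) (μ : ℝ) (v : n → ℝ) (hv : v ≠ 0) (h : A.mulVec v = μ • v) :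
    μ ∈ spectrum ℝ A := by
  rw [← AlgEquiv.spectrum_eq (Matrix.toLinAlgEquiv' : Matrix n n ℝ ≃ₐ[ℝ] _),
    ← Module.End.hasEigenvalue_iff_mem_spectrum]
  exact Module.End.hasEigenvalue_of_hasEigenvector
    ⟨Module.End.mem_eigenspace_iff.2 (by rw [Matrix.toLinAlgEquiv'_apply, h]), hv⟩

theorem statement4 (s : ℕ) (hs : 0 < s) :
    ∃ μ ∈ spectrum ℝ ((coneOverCliques (s + 1) (s * (s - 1) + 1)).adjMatrix ℝ),
      μ < -(s : ℝ) := by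
  set p : ℕ := s * (s - 1) + 1 with hp
  have hs1 : (1:ℕ) ≤ s := hs
  set D : ℝ := (s:ℝ)^2 - (s:ℝ) with hD
  set P : ℝ := D + 1 with hPdef
  set N : ℝ := (s:ℝ) + 1 with hN
  have hPcast : ((p : ℕ) : ℝ) = P := by
    rw [hp, hPdef, hD]
    push_cast [Nat.cast_sub hs1]
    ring
  have hsR : (1:ℝ) ≤ (s:ℝ) := by exact_mod_cast hs1
  have hD0 : 0 ≤ D := by nlinarith
  have hArg : 0 ≤ D^2 + 4*P*N := by nlinarith
  set r : ℝ := Real.sqrt (D^2 + 4*P*N) with hr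
  have hr2 : r^2 = D^2 + 4*P*N := Real.sq_sqrt hArg
  set μ : ℝ := (D - r)/2 with hμ
  set y : ℝ := μ - D with hy
  have hkey : μ * y = P * N := by
    rw [hy, hμ]; nlinarith [hr2]
  have hrlt : (s:ℝ)^2 + s < r := by
    have h1 : ((s:ℝ)^2 + s)^2 < D^2 + 4*P*N := by rw [hPdef, hD, hN]; nlinarith
    nlinarith [hr2, Real.sqrt_nonneg (D^2 + 4*P*N)]
  have hμlt : μ < -(s:ℝ) := by
    rw [hμ]
    have : D = (s:ℝ)^2 - s := hD
    linarith
  refine ⟨μ, ?_, hμlt⟩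
  set v : Option (Fin (s+1) × Fin p) → ℝ := fun a => a.elim y (fun _ => 1) with hv
  apply mem_spectrum_of_eigvec _ _ v
  · intro hcontra
    have h0 : v (some (⟨0, by omega⟩, ⟨0, by omega⟩)) = 0 := by rw [hcontra]; rfl
    simp [hv] at h0
  · funext a
    rw [SimpleGraph.adjMatrix_mulVec_apply, SimpleGraph.neighborFinset_eq_filter,
      Finset.sum_filter]
    match a with
    | none =>
      have hstep : ∀ b : Option (Fin (s+1) × Fin p),
          (if (coneOverCliques (s+1) p).Adj none b then v b else 0)
          = (if b = none then 0 else 1) := by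
        intro b
        match b with
        | none => simp [coneOverCliques]
        | some x => simp [coneOverCliques, hv]
      rw [Finset.sum_congr rfl (fun b _ => hstep b), Fintype.sum_option]
      simp only [if_pos rfl]
      have hsum1 : ∑ a : Fin (s+1) × Fin p, (if (some a : Option _) = none then (0:ℝ) else 1)
          = ((s+1) * p : ℕ) := by
        simp [Finset.card_univ]
      rw [hsum1]
      have hvnone : (μ • v) none = μ * y := by simp [hv]
      rw [hvnone, hkey]
      push_cast [hPcast]
      rw [hN]; ring
    | some x =>
      obtain ⟨i, j⟩ := x
      rw [Fintype.sum_option]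
      have h1 : (if (coneOverCliques (s+1) p).Adj (some (i,j)) none then v none else 0) = y := by
        rw [if_pos (by simp [coneOverCliques])]
        simp [hv]
      have h2 : ∀ z : Fin (s+1) × Fin p,
          (if (coneOverCliques (s+1) p).Adj (some (i,j)) (some z) then v (some z) else 0)
          = (if z.1 = i then (if z.2 ≠ j then (1:ℝ) else 0) else 0) := by
        rintro ⟨k, l⟩
        have hadj : (coneOverCliques (s+1) p).Adj (some (i,j)) (some (k,l)) ↔ (k = i ∧ l ≠ j) := by
          simp [coneOverCliques, Prod.ext_iff]
          tauto
        by_cases hk : k = i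
        · by_cases hl : l = j
          · simp [hadj, hk, hl]
          · rw [if_pos (hadj.2 ⟨hk, hl⟩)]
            simp [hv, hk, hl]
        · rw [if_neg (fun h => hk (hadj.1 h).1)]
          simp [hk]
      rw [Finset.sum_congr rfl (fun z _ => h2 z), h1]
      have h3 : ∑ z : Fin (s+1) × Fin p, (if z.1 = i then (if z.2 ≠ j then (1:ℝ) else 0) else 0)
          = (p:ℝ) - 1 := by
        rw [Fintype.sum_prod_type]
        rw [Finset.sum_eq_single i]
        · have h4 : ∀ l : Fin p, (if l ≠ j then (1:ℝ) else 0) = 1 - (if l = j then 1 else 0) := by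
            intro l; by_cases h : l = j <;> simp [h]
          simp only [if_pos rfl, h4, if_true]
          rw [Finset.sum_sub_distrib, Finset.sum_const, Finset.sum_ite_eq' Finset.univ j]
          simp [Finset.card_univ]
        · intro k _ hk; simp [hk]
        · intro h; exact absurd (Finset.mem_univ i) h
      rw [h3]
      have hvs : (μ • v) (some (i,j)) = μ := by simp [hv]
      rw [hvs, hPcast] -- may fail; goal: y + (P - 1) = μ
      rw [hy, hPdef]; ring
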